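/- In the (2,1)-I/O model pebble game on a directed bipartite gadget g consisting of n source vertices s_1,...,s_n, one target vertex t, and an edge from each s_j to t, the minimum number of unit-cost moves needed to eliminate all n edges and store the result (i.e., the optimal pebbling cost of g) is exactly n + 2. -/

import Mathlib

/-! The Red-Blue Pebble Game with partial computations, in the `(M,1)`-I/O model.
A pebble on a vertex means the corresponding word is in the cache; a blue pebble is a
"dirty" partial result that must be stored (cost 1) before it can leave the cache. -/

inductive Pebble : Type
  | red
  | blue
deriving DecidableEq

/-- A configuration: the remaining (not yet computed) edges of the DAG, and the pebble
(if any) on each vertex. -/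
structure Config (V : Type) where
  edges : Finset (V × V)
  peb : V → Option Pebble

variable {V : Type} [DecidableEq V] [Fintype V]

/-- The number of pebbles currently on the graph. -/
def pebCount (c : Config V) : ℕ :=
  (Finset.univ.filter fun v => (c.peb v).isSome).card

/-- One move of the game with at most `M` pebbles, together with its cost:
(R1) place a red pebble on an empty vertex, cost 1 (LOAD);
(R2) remove a red pebble, cost 0 (REMOVE), or change red to blue, cost 0;
(R3) change a blue pebble to red, cost 1 (STORE);
(R4) if `u` is a leaf and both `u` and `v` are pebbled, delete the edge `(u,v)` for free,
     and the pebble on `v` becomes blue (partial COMPUTE);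
(R5) at most `M` pebbles are on the graph at any time. -/
inductive Step (M : ℕ) : Config V → Config V → ℕ → Prop
  | load (c : Config V) (v : V) (h : c.peb v = none) (hM : pebCount c < M) :
      Step M c ⟨c.edges, Function.update c.peb v (some Pebble.red)⟩ 1
  | remove (c : Config V) (v : V) (h : c.peb v = some Pebble.red) :
      Step M c ⟨c.edges, Function.update c.peb v none⟩ 0
  | toBlue (c : Config V) (v : V) (h : c.peb v = some Pebble.red) :
      Step M c ⟨c.edges, Function.update c.peb v (some Pebble.blue)⟩ 0
  | store (c : Config V) (v : V) (h : c.peb v = some Pebble.blue) :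
      Step M c ⟨c.edges, Function.update c.peb v (some Pebble.red)⟩ 1
  | compute (c : Config V) (u v : V) (he : (u, v) ∈ c.edges)
      (hleaf : ∀ x, (x, u) ∉ c.edges)
      (hu : (c.peb u).isSome) (hv : (c.peb v).isSome) :
      Step M c ⟨c.edges.erase (u, v), Function.update c.peb v (some Pebble.blue)⟩ 0

/-- `Reach M c c' k`: configuration `c'` is reachable from `c` by a pebbling strategy of
total cost `k`. -/
inductive Reach (M : ℕ) : Config V → Config V → ℕ → Prop
  | refl (c : Config V) : Reach M c c 0
  | tail {a b c : Config V} {k1 k2 : ℕ} :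
      Reach M a b k1 → Step M b c k2 → Reach M a c (k1 + k2)

/-- The set of costs of pebbling strategies that, starting from the DAG with edge set `E`
and an empty cache, delete all edges and store all results (no dirty blue pebble
remains). -/
def Achievable (M : ℕ) (E : Finset (V × V)) : Set ℕ :=
  {k | ∃ c' : Config V, Reach M ⟨E, fun _ => none⟩ c' k ∧
    c'.edges = ∅ ∧ ∀ v, c'.peb v ≠ some Pebble.blue}

/-- The star gadget: `n` source vertices `1, ..., n`, one target vertex `0`, and an edge
from each source to the target. -/
def starEdges (n : ℕ) : Finset (Fin (n + 1) × Fin (n + 1)) :=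
  Finset.univ.image fun i : Fin n => ((i.succ : Fin (n + 1)), (0 : Fin (n + 1)))

/-! ## Auxiliary material -/

lemma reach_trans {M : ℕ} {a b c : Config V} {k1 k2 : ℕ}
    (h1 : Reach M a b k1) (h2 : Reach M b c k2) : Reach M a c (k1 + k2) := by
  induction h2 with
  | refl => exact h1
  | tail _ s ih => rw [← Nat.add_assoc]; exact ih.tail s

lemma reach_cast {M : ℕ} {a b : Config V} {k k' : ℕ}
    (h : Reach M a b k) (e : k = k') : Reach M a b k' := e ▸ h

lemma step_congr {M : ℕ} {a b b' : Config V} {k : ℕ}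
    (h : Step M a b k) (e : b = b') : Step M a b' k := e ▸ h

lemma mem_starEdges {n : ℕ} {e : Fin (n+1) × Fin (n+1)} :
    e ∈ starEdges n ↔ ∃ i : Fin n, e = (i.succ, 0) := by
  simp [starEdges, eq_comm]

lemma card_starEdges (n : ℕ) : (starEdges n).card = n := by
  rw [starEdges, Finset.card_image_of_injective _ (fun i j h => by
    simpa [Fin.succ_inj] using congrArg Prod.fst h)]
  simp

/-- Remaining edges after the first `k` sources have been processed. -/
def Ek (n k : ℕ) : Finset (Fin (n+1) × Fin (n+1)) :=
  (Finset.univ.filter fun i : Fin n => k ≤ i.val).image fun i => (i.succ, 0)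

lemma Ek_zero (n : ℕ) : Ek n 0 = starEdges n := by
  simp [Ek, starEdges]

lemma Ek_n (n : ℕ) : Ek n n = ∅ := by
  simp only [Ek, Finset.image_eq_empty]
  ext i
  simp [Nat.not_le_of_lt i.isLt, Nat.lt_irrefl]

lemma mem_Ek {n k : ℕ} {e : Fin (n+1) × Fin (n+1)} :
    e ∈ Ek n k ↔ ∃ i : Fin n, k ≤ i.val ∧ e = (i.succ, 0) := by
  simp [Ek, eq_comm, and_comm]

lemma Ek_erase (n k : ℕ) (hk : k < n) :
    (Ek n k).erase ((⟨k, hk⟩ : Fin n).succ, 0) = Ek n (k+1) := by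
  ext e
  simp only [Finset.mem_erase, mem_Ek]
  constructor
  · rintro ⟨hne, i, hki, rfl⟩
    refine ⟨i, ?_, rfl⟩
    have hik : i.val ≠ k := by
      intro h; exact hne (by simp [Prod.ext_iff, Fin.succ_inj, Fin.ext_iff, h])
    omega
  · rintro ⟨i, hki, rfl⟩
    refine ⟨fun h => ?_, i, by omega, rfl⟩
    have : i.val = k := by simpa [Prod.ext_iff, Fin.succ_inj, Fin.ext_iff] using h
    omega

def pebT (n : ℕ) : Fin (n+1) → Option Pebble := fun v => if v = 0 then some Pebble.blue else none

lemma pebT_count (n : ℕ) (E : Finset (Fin (n+1) × Fin (n+1))) :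
    pebCount (⟨E, pebT n⟩ : Config (Fin (n+1))) = 1 := by
  rw [pebCount]
  have : (Finset.univ.filter fun v : Fin (n+1) => ((pebT n) v).isSome) = {0} := by
    ext v; by_cases h : v = 0 <;> simp [pebT, h]
  rw [this]; simp

/-- One iteration: process source `k`. -/
lemma iter (n k : ℕ) (hk : k < n) :
    Reach 2 ⟨Ek n k, pebT n⟩ ⟨Ek n (k+1), pebT n⟩ 1 := by
  set v : Fin (n+1) := (⟨k, hk⟩ : Fin n).succ with hv
  have hv0 : v ≠ 0 := Fin.succ_ne_zero _
  -- step 1: load v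
  have s1 : Step 2 (⟨Ek n k, pebT n⟩ : Config (Fin (n+1)))
      ⟨Ek n k, Function.update (pebT n) v (some Pebble.red)⟩ 1 := by
    refine Step.load _ v ?_ ?_
    · simp [pebT, hv0]
    · rw [pebT_count]; omega
  set p1 : Fin (n+1) → Option Pebble := Function.update (pebT n) v (some Pebble.red) with hp1
  -- step 2: compute (v, 0)
  have s2 : Step 2 (⟨Ek n k, p1⟩ : Config (Fin (n+1)))
      ⟨Ek n (k+1), Function.update p1 0 (some Pebble.blue)⟩ 0 := by
    refine step_congr (Step.compute _ v 0 ?_ ?_ ?_ ?_) ?_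
    · exact mem_Ek.mpr ⟨⟨k, hk⟩, le_refl _, rfl⟩
    · intro x hx
      rcases mem_Ek.mp hx with ⟨i, _, h⟩
      exact hv0 (by simpa using congrArg Prod.snd h)
    · simp [hp1]
    · simp [hp1, Function.update_of_ne hv0.symm, pebT]
    · simp [show (Ek n k).erase (v, 0) = Ek n (k+1) from Ek_erase n k hk]
  set p2 : Fin (n+1) → Option Pebble := Function.update p1 0 (some Pebble.blue) with hp2
  -- step 3: remove v
  have s3 : Step 2 (⟨Ek n (k+1), p2⟩ : Config (Fin (n+1)))
      ⟨Ek n (k+1), pebT n⟩ 0 := by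
    refine step_congr (Step.remove _ v ?_) ?_
    · simp [hp2, Function.update_of_ne hv0, hp1]
    · refine congrArg _ (funext fun w => ?_)
      by_cases hw : w = v
      · subst hw; simp [pebT, hv0]
      · by_cases hw0 : w = 0
        · subst hw0; simp [Function.update_of_ne (Ne.symm hv0), hp2, pebT]
        · simp [Function.update_of_ne hw, hp2, Function.update_of_ne hw0, hp1,
            Function.update_of_ne hw, pebT, hw0]
  exact reach_cast ((((Reach.refl _).tail s1).tail s2).tail s3) rfl

lemma loop (n : ℕ) : ∀ m k, k + m = n → Reach 2 ⟨Ek n k, pebT n⟩ ⟨Ek n n, pebT n⟩ m := by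
  intro m
  induction m with
  | zero => intro k hk; rw [Nat.add_zero] at hk; subst hk; exact Reach.refl _
  | succ m ih =>
    intro k hk
    have hkn : k < n := by omega
    exact reach_cast (reach_trans (iter n k hkn) (ih (k+1) (by omega))) (by omega)

lemma upper (n : ℕ) (hn : 1 ≤ n) : (n + 2) ∈ Achievable 2 (starEdges n) := by
  have h0n : 0 < n := hn
  set s0 : Fin (n+1) := (⟨0, h0n⟩ : Fin n).succ with hs0
  have hs00 : s0 ≠ 0 := Fin.succ_ne_zero _
  set init : Config (Fin (n+1)) := ⟨starEdges n, fun _ => none⟩ with hinit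
  -- step a: load s0
  have sa : Step 2 init ⟨starEdges n, Function.update (fun _ => none) s0 (some Pebble.red)⟩ 1 := by
    refine Step.load _ s0 rfl ?_
    have : pebCount init = 0 := by
      rw [pebCount]
      simp [hinit]
    omega
  set p1 : Fin (n+1) → Option Pebble := Function.update (fun _ => none) s0 (some Pebble.red)
    with hp1
  -- step b: load 0
  have sb : Step 2 (⟨starEdges n, p1⟩ : Config (Fin (n+1)))
      ⟨starEdges n, Function.update p1 0 (some Pebble.red)⟩ 1 := by
    refine Step.load _ 0 (by simp [hp1, Function.update_of_ne (Ne.symm hs00)]) ?_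
    have : (Finset.univ.filter fun v : Fin (n+1) => (p1 v).isSome) = {s0} := by
      ext v; by_cases h : v = s0 <;> simp [hp1, h, Function.update_of_ne]
    rw [pebCount]; simp only []
    rw [this]; simp
  set p2 : Fin (n+1) → Option Pebble := Function.update p1 0 (some Pebble.red) with hp2
  -- step c: compute (s0, 0)
  have sc : Step 2 (⟨starEdges n, p2⟩ : Config (Fin (n+1)))
      ⟨Ek n 1, Function.update p2 0 (some Pebble.blue)⟩ 0 := by
    refine step_congr (Step.compute _ s0 0 ?_ ?_ ?_ ?_) ?_
    · exact mem_starEdges.mpr ⟨⟨0, h0n⟩, rfl⟩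
    · intro x hx
      rcases mem_starEdges.mp hx with ⟨i, h⟩
      exact hs00 (by simpa using congrArg Prod.snd h)
    · simp [hp2, Function.update_of_ne hs00, hp1]
    · simp [hp2]
    · have : (starEdges n).erase (s0, 0) = Ek n 1 := by
        rw [← Ek_zero n]; exact Ek_erase n 0 h0n
      simp [this]
  set p3 : Fin (n+1) → Option Pebble := Function.update p2 0 (some Pebble.blue) with hp3
  -- step d: remove s0
  have sd : Step 2 (⟨Ek n 1, p3⟩ : Config (Fin (n+1))) ⟨Ek n 1, pebT n⟩ 0 := by
    refine step_congr (Step.remove _ s0 ?_) ?_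
    · simp [hp3, Function.update_of_ne hs00, hp2, Function.update_of_ne hs00, hp1]
    · refine congrArg _ (funext fun w => ?_)
      by_cases hw : w = s0
      · subst hw; simp [pebT, hs00]
      · by_cases hw0 : w = 0
        · subst hw0; simp [Function.update_of_ne (Ne.symm hs00), hp3, pebT]
        · simp [Function.update_of_ne hw, hp3, Function.update_of_ne hw0, hp2, hp1,
            Function.update_of_ne hw, pebT, hw0]
  have prefix1 : Reach 2 init ⟨Ek n 1, pebT n⟩ 2 :=
    reach_cast (((((Reach.refl _).tail sa).tail sb).tail sc).tail sd) rfl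
  have hl : Reach 2 (⟨Ek n 1, pebT n⟩ : Config (Fin (n+1))) ⟨Ek n n, pebT n⟩ (n - 1) :=
    loop n (n-1) 1 (by omega)
  -- final store
  have se : Step 2 (⟨Ek n n, pebT n⟩ : Config (Fin (n+1)))
      ⟨Ek n n, Function.update (pebT n) 0 (some Pebble.red)⟩ 1 :=
    Step.store _ 0 (by simp [pebT])
  refine ⟨⟨Ek n n, Function.update (pebT n) 0 (some Pebble.red)⟩,
    reach_cast ((reach_trans prefix1 hl).tail se) (by omega), by simp [Ek_n], fun v => ?_⟩
  by_cases hv : v = 0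
  · subst hv; simp
  · simp [Function.update_of_ne hv, pebT, hv]

/-! ## Lower bound: potential function -/

/-- Number of edges already deleted. -/
def Dp (n : ℕ) (c : Config (Fin (n+1))) : ℕ := n - c.edges.card

/-- Number of sources carrying a pebble whose edge is still present. -/
def Sp (n : ℕ) (c : Config (Fin (n+1))) : ℕ :=
  (Finset.univ.filter fun i : Fin n =>
      (i.succ, (0 : Fin (n+1))) ∈ c.edges ∧ (c.peb i.succ).isSome).card

/-- Whether the target has ever been pebbled. -/
def Ap (n : ℕ) (c : Config (Fin (n+1))) : ℕ :=
  if (c.peb 0).isSome ∨ c.edges ≠ starEdges n then 1 else 0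

/-- Whether the final result has been stored. -/
def Bp (n : ℕ) (c : Config (Fin (n+1))) : ℕ :=
  if c.edges = ∅ ∧ c.peb 0 ≠ some Pebble.blue then 1 else 0

def phi (n : ℕ) (c : Config (Fin (n+1))) : ℕ := Dp n c + Sp n c + Ap n c + Bp n c

lemma Ap_le_one (n : ℕ) (c : Config (Fin (n+1))) : Ap n c ≤ 1 := by
  rw [Ap]; split <;> omega

lemma Bp_le_one (n : ℕ) (c : Config (Fin (n+1))) : Bp n c ≤ 1 := by
  rw [Bp]; split <;> omega

lemma Sp_congr {n : ℕ} {c c' : Config (Fin (n+1))}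
    (he : c'.edges = c.edges)
    (hp : ∀ i : Fin n, (c'.peb i.succ).isSome = (c.peb i.succ).isSome) :
    Sp n c' = Sp n c := by
  rw [Sp, Sp]
  congr 1
  ext i
  simp [he, hp i]

lemma phi_step {n M : ℕ} {c c' : Config (Fin (n+1))} {k : ℕ}
    (hsub : c.edges ⊆ starEdges n) (hs : Step M c c' k) :
    c'.edges ⊆ c.edges ∧ phi n c' ≤ phi n c + k := by
  cases hs with
  | load v h hM =>
    refine ⟨Finset.Subset.refl _, ?_⟩
    rcases Fin.eq_zero_or_eq_succ v with rfl | ⟨j, rfl⟩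
    · have hS : Sp n ⟨c.edges, Function.update c.peb 0 (some Pebble.red)⟩ = Sp n c :=
        Sp_congr rfl (fun i => by simp [Function.update_of_ne (Fin.succ_ne_zero i)])
      have hB : Bp n ⟨c.edges, Function.update c.peb 0 (some Pebble.red)⟩ = Bp n c := by
        simp only [Bp, h, Function.update_self]
        simp
      have hA := Ap_le_one n (⟨c.edges, Function.update c.peb 0 (some Pebble.red)⟩ :
        Config (Fin (n+1)))
      simp only [phi, Dp, hS, hB]
      omega
    · have hA : Ap n ⟨c.edges, Function.update c.peb j.succ (some Pebble.red)⟩ = Ap n c := by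
        simp only [Ap, Function.update_of_ne (Fin.succ_ne_zero j).symm]
      have hB : Bp n ⟨c.edges, Function.update c.peb j.succ (some Pebble.red)⟩ = Bp n c := by
        simp only [Bp, Function.update_of_ne (Fin.succ_ne_zero j).symm]
      have hS : Sp n ⟨c.edges, Function.update c.peb j.succ (some Pebble.red)⟩ ≤ Sp n c + 1 := by
        rw [Sp, Sp]
        calc _ ≤ (insert j (Finset.univ.filter fun i : Fin n =>
              (i.succ, (0 : Fin (n+1))) ∈ c.edges ∧ (c.peb i.succ).isSome)).card := by
              refine Finset.card_le_card fun i hi => ?_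
              simp only [Finset.mem_filter, Finset.mem_univ, true_and] at hi
              by_cases hij : i = j
              · subst hij; exact Finset.mem_insert_self _ _
              · refine Finset.mem_insert_of_mem ?_
                rw [Function.update_of_ne (fun hc => hij (Fin.succ_injective _ hc))] at hi
                simp [Finset.mem_filter, hi]
          _ ≤ _ := Finset.card_insert_le _ _
      simp only [phi, Dp, hA, hB]
      omega
  | remove v h =>
    refine ⟨Finset.Subset.refl _, ?_⟩
    rcases Fin.eq_zero_or_eq_succ v with rfl | ⟨j, rfl⟩
    · have hS : Sp n ⟨c.edges, Function.update c.peb 0 none⟩ = Sp n c :=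
        Sp_congr rfl (fun i => by simp [Function.update_of_ne (Fin.succ_ne_zero i)])
      have hA : Ap n c = 1 := by simp [Ap, h]
      have hB : Bp n ⟨c.edges, Function.update c.peb 0 none⟩ = Bp n c := by
        simp only [Bp, h, Function.update_self]
        simp
      have hA' := Ap_le_one n (⟨c.edges, Function.update c.peb 0 none⟩ : Config (Fin (n+1)))
      simp only [phi, Dp, hS, hB]
      omega
    · have hA : Ap n ⟨c.edges, Function.update c.peb j.succ none⟩ = Ap n c := by
        simp only [Ap, Function.update_of_ne (Fin.succ_ne_zero j).symm]
      have hB : Bp n ⟨c.edges, Function.update c.peb j.succ none⟩ = Bp n c := by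
        simp only [Bp, Function.update_of_ne (Fin.succ_ne_zero j).symm]
      have hS : Sp n ⟨c.edges, Function.update c.peb j.succ none⟩ ≤ Sp n c := by
        refine Finset.card_le_card fun i hi => ?_
        simp only [Finset.mem_filter, Finset.mem_univ, true_and] at hi ⊢
        by_cases hij : i = j
        · subst hij; rw [Function.update_self] at hi; simp at hi
        · rwa [Function.update_of_ne (fun hc => hij (Fin.succ_injective _ hc))] at hi
      simp only [phi, Dp, hA, hB]
      omega
  | toBlue v h =>
    refine ⟨Finset.Subset.refl _, ?_⟩
    rcases Fin.eq_zero_or_eq_succ v with rfl | ⟨j, rfl⟩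
    · have hS : Sp n ⟨c.edges, Function.update c.peb 0 (some Pebble.blue)⟩ = Sp n c :=
        Sp_congr rfl (fun i => by simp [Function.update_of_ne (Fin.succ_ne_zero i)])
      have hA : Ap n c = 1 := by simp [Ap, h]
      have hA' : Ap n ⟨c.edges, Function.update c.peb 0 (some Pebble.blue)⟩ = 1 := by
        simp [Ap]
      have hB := Bp_le_one n (⟨c.edges, Function.update c.peb 0 (some Pebble.blue)⟩ :
        Config (Fin (n+1)))
      have hB' : Bp n ⟨c.edges, Function.update c.peb 0 (some Pebble.blue)⟩ = 0 := by
        simp [Bp]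
      simp only [phi, Dp, hS, hA, hA', hB']
      omega
    · have hA : Ap n ⟨c.edges, Function.update c.peb j.succ (some Pebble.blue)⟩ = Ap n c := by
        simp only [Ap, Function.update_of_ne (Fin.succ_ne_zero j).symm]
      have hB : Bp n ⟨c.edges, Function.update c.peb j.succ (some Pebble.blue)⟩ = Bp n c := by
        simp only [Bp, Function.update_of_ne (Fin.succ_ne_zero j).symm]
      have hS : Sp n ⟨c.edges, Function.update c.peb j.succ (some Pebble.blue)⟩ = Sp n c := by
        refine Sp_congr rfl (fun i => ?_)
        by_cases hij : i = j
        · subst hij; simp [h]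
        · simp [Function.update_of_ne (fun hc => hij (Fin.succ_injective _ hc))]
      simp only [phi, Dp, hA, hB, hS]
      omega
  | store v h =>
    refine ⟨Finset.Subset.refl _, ?_⟩
    rcases Fin.eq_zero_or_eq_succ v with rfl | ⟨j, rfl⟩
    · have hS : Sp n ⟨c.edges, Function.update c.peb 0 (some Pebble.red)⟩ = Sp n c :=
        Sp_congr rfl (fun i => by simp [Function.update_of_ne (Fin.succ_ne_zero i)])
      have hA : Ap n c = 1 := by simp [Ap, h]
      have hA' : Ap n ⟨c.edges, Function.update c.peb 0 (some Pebble.red)⟩ = 1 := by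
        simp [Ap]
      have hB := Bp_le_one n (⟨c.edges, Function.update c.peb 0 (some Pebble.red)⟩ :
        Config (Fin (n+1)))
      simp only [phi, Dp, hS, hA, hA']
      omega
    · have hA : Ap n ⟨c.edges, Function.update c.peb j.succ (some Pebble.red)⟩ = Ap n c := by
        simp only [Ap, Function.update_of_ne (Fin.succ_ne_zero j).symm]
      have hB : Bp n ⟨c.edges, Function.update c.peb j.succ (some Pebble.red)⟩ = Bp n c := by
        simp only [Bp, Function.update_of_ne (Fin.succ_ne_zero j).symm]
      have hS : Sp n ⟨c.edges, Function.update c.peb j.succ (some Pebble.red)⟩ = Sp n c := by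
        refine Sp_congr rfl (fun i => ?_)
        by_cases hij : i = j
        · subst hij; simp [h]
        · simp [Function.update_of_ne (fun hc => hij (Fin.succ_injective _ hc))]
      simp only [phi, Dp, hA, hB, hS]
      omega
  | compute u v he hleaf hu hv =>
    refine ⟨Finset.erase_subset _ _, ?_⟩
    obtain ⟨j, huv⟩ := mem_starEdges.mp (hsub he)
    injection huv with hu0 hv0
    subst hu0; subst hv0
    have hE1 : 1 ≤ c.edges.card := Finset.card_pos.mpr ⟨_, he⟩
    have hEn : c.edges.card ≤ n := by
      have := Finset.card_le_card hsub
      rwa [card_starEdges] at this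
    have hjmem : j ∈ Finset.univ.filter fun i : Fin n =>
        (i.succ, (0 : Fin (n+1))) ∈ c.edges ∧ (c.peb i.succ).isSome := by
      simp [Finset.mem_filter, he, hu]
    have hS1 : 1 ≤ Sp n c := Finset.card_pos.mpr ⟨j, hjmem⟩
    have hS : Sp n ⟨c.edges.erase (j.succ, 0), Function.update c.peb 0 (some Pebble.blue)⟩
        = Sp n c - 1 := by
      rw [Sp, Sp, ← Finset.card_erase_of_mem hjmem]
      congr 1
      ext i
      simp only [Finset.mem_filter, Finset.mem_univ, true_and, Finset.mem_erase,
        Finset.mem_filter]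
      rw [Function.update_of_ne (Fin.succ_ne_zero i)]
      constructor
      · rintro ⟨⟨hne, hmem⟩, hsome⟩
        refine ⟨fun hij => hne ?_, hmem, hsome⟩
        subst hij; rfl
      · rintro ⟨hij, hmem, hsome⟩
        exact ⟨⟨fun hc => hij (Fin.succ_injective _ (Prod.ext_iff.mp hc).1),
          hmem⟩, hsome⟩
    have hA : Ap n c = 1 := by simp [Ap, hv]
    have hA' : Ap n ⟨c.edges.erase (j.succ, 0), Function.update c.peb 0 (some Pebble.blue)⟩
        = 1 := by simp [Ap]
    have hB' : Bp n ⟨c.edges.erase (j.succ, 0), Function.update c.peb 0 (some Pebble.blue)⟩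
        = 0 := by simp [Bp]
    have hD' : Dp n ⟨c.edges.erase (j.succ, 0), Function.update c.peb 0 (some Pebble.blue)⟩
        = n - (c.edges.card - 1) := by
      simp [Dp, Finset.card_erase_of_mem he]
    simp only [phi, hS, hA, hA', hB', hD']
    have hD : Dp n c = n - c.edges.card := rfl
    rw [hD]
    omega

lemma reach_phi {n M : ℕ} {c : Config (Fin (n+1))} {k : ℕ} (hn : 1 ≤ n)
    (h : Reach M ⟨starEdges n, fun _ => none⟩ c k) :
    c.edges ⊆ starEdges n ∧ phi n c ≤ k := by
  induction h with
  | refl =>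
    refine ⟨Finset.Subset.refl _, ?_⟩
    have hD : Dp n ⟨starEdges n, fun _ => none⟩ = 0 := by
      simp [Dp, card_starEdges]
    have hS : Sp n (⟨starEdges n, fun _ => none⟩ : Config (Fin (n+1))) = 0 := by
      simp [Sp]
    have hA : Ap n (⟨starEdges n, fun _ => none⟩ : Config (Fin (n+1))) = 0 := by
      simp [Ap]
    have hB : Bp n (⟨starEdges n, fun _ => none⟩ : Config (Fin (n+1))) = 0 := by
      have : ((⟨0, hn⟩ : Fin n).succ, (0 : Fin (n+1))) ∈ starEdges n :=
        mem_starEdges.mpr ⟨_, rfl⟩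
      simp only [Bp]
      rw [if_neg]
      rintro ⟨h1, -⟩
      rw [h1] at this
      exact absurd this (Finset.notMem_empty _)
    simp [phi, hD, hS, hA, hB]
  | tail hr hs ih =>
    obtain ⟨hsub, hphi⟩ := ih
    obtain ⟨hsub', hphi'⟩ := phi_step hsub hs
    exact ⟨hsub'.trans hsub, by omega⟩

lemma lower (n : ℕ) (hn : 1 ≤ n) : ∀ k ∈ Achievable 2 (starEdges n), n + 2 ≤ k := by
  rintro k ⟨c', hreach, hedges, hblue⟩
  obtain ⟨-, hphi⟩ := reach_phi hn hreach
  have hne : starEdges n ≠ (∅ : Finset (Fin (n+1) × Fin (n+1))) := by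
    intro h
    have : ((⟨0, hn⟩ : Fin n).succ, (0 : Fin (n+1))) ∈ starEdges n :=
      mem_starEdges.mpr ⟨_, rfl⟩
    rw [h] at this
    exact absurd this (Finset.notMem_empty _)
  have hD : Dp n c' = n := by simp [Dp, hedges]
  have hA : Ap n c' = 1 := by
    simp only [Ap, hedges]
    rw [if_pos (Or.inr (Ne.symm hne))]
  have hB : Bp n c' = 1 := by
    simp only [Bp, hedges]
    exact if_pos ⟨trivial, hblue 0⟩
  have : n + 2 ≤ phi n c' := by
    simp only [phi, hD, hA, hB]; omega
  omega

/-- in the `(2,1)`-I/O model pebble game on the star gadget with `n ≥ 1`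
sources and one target, the minimum cost to eliminate all `n` edges and store the result
is exactly `n + 2`. -/
theorem stmt9 (n : ℕ) (hn : 1 ≤ n) :
    IsLeast (Achievable 2 (starEdges n)) (n + 2) :=
  ⟨upper n hn, fun k hk => lower n hn k hk⟩
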